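/- Let p be a prime, let G be a finite group, let S be a Sylow p-subgroup of G, and let Q ≤ S. Then Q is fully normalized in the fusion system F_S(G) — that is, |N_S(Q)| ≥ |N_S(gQg⁻¹)| for every g ∈ G with gQg⁻¹ ≤ S — if and only if N_S(Q) is a Sylow p-subgroup of N_G(Q). -/

import Mathlib

/-- For a finite group `G` with Sylow `p`-subgroup `S`, a subgroup `Q ≤ S` is
*fully normalized* in the fusion system `F_S(G)` if `|N_S(Q)| ≥ |N_S(gQg⁻¹)|` for every
`g ∈ G` with `gQg⁻¹ ≤ S`. -/
def FullyNormalized {G : Type*} [Group G] (S Q : Subgroup G) : Prop :=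
  ∀ g : G, Subgroup.map (MulAut.conj g).toMonoidHom Q ≤ S →
    Nat.card ↥(Subgroup.normalizer ((Subgroup.map (MulAut.conj g).toMonoidHom Q : Subgroup G) : Set G) ⊓ S) ≤
      Nat.card ↥(Subgroup.normalizer (Q : Set G) ⊓ S)


open Subgroup

private lemma map_conj_inv_map_conj' {G : Type*} [Group G] (g : G) (Q : Subgroup G) :
    Subgroup.map (MulAut.conj g⁻¹).toMonoidHom (Subgroup.map (MulAut.conj g).toMonoidHom Q) = Q := by
  rw [Subgroup.map_map]
  have : (MulAut.conj g⁻¹).toMonoidHom.comp (MulAut.conj g).toMonoidHom = MonoidHom.id G := by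
    ext x; simp; group
  rw [this, Subgroup.map_id]

private lemma card_map_conj' {G : Type*} [Group G] (g : G) (H : Subgroup G) :
    Nat.card (Subgroup.map (MulAut.conj g).toMonoidHom H) = Nat.card H :=
  Nat.card_congr ((MulAut.conj g).subgroupMap H).toEquiv.symm

theorem fullyNormalized_iff_normalizer_sylow
    (p : ℕ) (hp : p.Prime) (G : Type*) [Group G] [Finite G]
    (S : Sylow p G) (Q : Subgroup G) (hQ : Q ≤ S) :
    FullyNormalized (S : Subgroup G) Q ↔
      ∃ R : Sylow p ↥(Subgroup.normalizer (Q : Set G)),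
        (R : Subgroup ↥(Subgroup.normalizer (Q : Set G))) =
          (Subgroup.normalizer (Q : Set G) ⊓ (S : Subgroup G)).subgroupOf (Subgroup.normalizer (Q : Set G)) := by
  haveI := Fact.mk hp
  set N := Subgroup.normalizer (Q : Set G) with hN
  set T : Subgroup ↥N := (N ⊓ (S : Subgroup G)).subgroupOf N with hT
  have hTcard : Nat.card T = Nat.card ↥(N ⊓ (S : Subgroup G)) :=
    Nat.card_congr (subgroupOfEquivOfLe inf_le_left).toEquiv
  have hT_p : IsPGroup p T :=
    ((S.isPGroup'.to_le inf_le_right).of_equiv (subgroupOfEquivOfLe inf_le_left).symm)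
  constructor
  · intro h
    obtain ⟨R, hTR⟩ := hT_p.exists_le_sylow
    -- Q.subgroupOf N is a normal p-subgroup of N, hence contained in R
    have hQsub_p : IsPGroup p (Q.subgroupOf N) :=
      (S.isPGroup'.to_le hQ).of_equiv (subgroupOfEquivOfLe le_normalizer).symm
    have hQR : Q.subgroupOf N ≤ (R : Subgroup ↥N) := by
      have hsup : IsPGroup p ((R : Subgroup ↥N) ⊔ Q.subgroupOf N : Subgroup ↥N) :=
        R.isPGroup'.to_sup_of_normal_right hQsub_p
      have := R.is_maximal' hsup le_sup_left
      rw [← this]; exact le_sup_right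
    set R' : Subgroup G := (R : Subgroup ↥N).map N.subtype with hR'
    have hR'_p : IsPGroup p R' := R.isPGroup'.map N.subtype
    have hQR' : Q ≤ R' := by
      have : Q = (Q.subgroupOf N).map N.subtype := by
        rw [subgroupOf_map_subtype, inf_eq_left.mpr le_normalizer]
      rw [this]; exact Subgroup.map_mono hQR
    have hR'N : R' ≤ N := map_subtype_le _
    obtain ⟨P, hR'P⟩ := hR'_p.exists_le_sylow
    obtain ⟨g, hg⟩ := MulAction.exists_smul_eq G P S
    have hgP : Subgroup.map (MulAut.conj g).toMonoidHom (P : Subgroup G) = (S : Subgroup G) := by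
      rw [← hg]; rfl
    set Q' := Subgroup.map (MulAut.conj g).toMonoidHom Q with hQ'
    have hQ'S : Q' ≤ (S : Subgroup G) := by
      rw [← hgP]; exact Subgroup.map_mono (hQR'.trans hR'P)
    have hle := h g hQ'S
    have hnorm : Subgroup.map (MulAut.conj g).toMonoidHom N = Subgroup.normalizer (Q' : Set G) := by
      rw [hN, hQ', map_equiv_normalizer_eq Q (MulAut.conj g)]
    have hR'le : Subgroup.map (MulAut.conj g).toMonoidHom R' ≤ Subgroup.normalizer (Q' : Set G) ⊓ (S : Subgroup G) :=
      le_inf (hnorm ▸ Subgroup.map_mono hR'N) (hgP ▸ Subgroup.map_mono hR'P)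
    have hcard : Nat.card (R : Subgroup ↥N) ≤ Nat.card T := by
      calc Nat.card (R : Subgroup ↥N) = Nat.card R' :=
            Nat.card_congr (equivMapOfInjective _ _ N.subtype_injective).toEquiv
        _ = Nat.card (Subgroup.map (MulAut.conj g).toMonoidHom R') := (card_map_conj' g R').symm
        _ ≤ Nat.card ↥(Subgroup.normalizer (Q' : Set G) ⊓ (S : Subgroup G)) := Subgroup.card_le_of_le hR'le
        _ ≤ Nat.card ↥(N ⊓ (S : Subgroup G)) := hle
        _ = Nat.card T := hTcard.symm
    exact ⟨R, (Subgroup.eq_of_le_of_card_ge hTR hcard).symm⟩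
  · rintro ⟨R, hR⟩ g hgQ
    set Q' := Subgroup.map (MulAut.conj g).toMonoidHom Q with hQ'
    set K := Subgroup.normalizer (Q' : Set G) ⊓ (S : Subgroup G) with hK
    set K' := Subgroup.map (MulAut.conj g⁻¹).toMonoidHom K with hK'
    have hK'N : K' ≤ N := by
      have : Subgroup.map (MulAut.conj g⁻¹).toMonoidHom (Subgroup.normalizer (Q' : Set G)) = N := by
        rw [hN, hQ', map_equiv_normalizer_eq Q' (MulAut.conj g⁻¹), map_conj_inv_map_conj']
      calc K' ≤ Subgroup.map (MulAut.conj g⁻¹).toMonoidHom (Subgroup.normalizer (Q' : Set G)) :=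
            Subgroup.map_mono inf_le_left
        _ = N := this
    have hK'_p : IsPGroup p (K'.subgroupOf N) :=
      (((S.isPGroup'.to_le inf_le_right).of_equiv
        ((MulAut.conj g⁻¹).subgroupMap K)).of_equiv (subgroupOfEquivOfLe hK'N).symm)
    obtain ⟨R₂, hKR₂⟩ := hK'_p.exists_le_sylow
    calc Nat.card ↥K = Nat.card K' := (card_map_conj' g⁻¹ K).symm
      _ = Nat.card (K'.subgroupOf N) := (Nat.card_congr (subgroupOfEquivOfLe hK'N).toEquiv).symm
      _ ≤ Nat.card (R₂ : Subgroup ↥N) := Subgroup.card_le_of_le hKR₂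
      _ = Nat.card (R : Subgroup ↥N) := by
          rw [Sylow.card_eq_multiplicity, Sylow.card_eq_multiplicity]
      _ = Nat.card ↥(N ⊓ (S : Subgroup G)) := by rw [hR, hTcard]
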